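/- Let p be a prime, G a finite group, and H a normal subgroup of G whose order is coprime to p; let π : G → G/H be the quotient homomorphism. Then: (i) for every finite chain Q_0 ≤ Q_1 ≤ … ≤ Q_m of p-subgroups of G/H there exists a chain P_0 ≤ P_1 ≤ … ≤ P_m of p-subgroups of G with π(P_t) = Q_t for every t; (ii) if P_0 ≤ … ≤ P_m and P'_0 ≤ … ≤ P'_m are two chains of p-subgroups of G with π(P_t) = π(P'_t) for every t, then there exists h ∈ H such that h P_t h⁻¹ = P'_t for every t. -/

import Mathlib

open Subgroup

section StmtAux

variable {p : ℕ} {G : Type*} [Group G] [Finite G] {H : Subgroup G} [H.Normal]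

omit [Finite G] [H.Normal] in
/-- An element of `H` with `p`-power order is trivial. -/
lemma stmt7_aux_triv (hcop : (Nat.card H).Coprime p) {z : G} (hz : z ∈ H)
    {k : ℕ} (hzk : z ^ p ^ k = 1) : z = 1 := by
  have h1 : orderOf z ∣ p ^ k := orderOf_dvd_of_pow_eq_one hzk
  have h2 : orderOf (⟨z, hz⟩ : H) ∣ Nat.card H := orderOf_dvd_natCard _
  have h3 : orderOf z ∣ Nat.card H := by rwa [← orderOf_submonoid] at h2
  have h4 : orderOf z ∣ Nat.gcd (Nat.card H) (p ^ k) := Nat.dvd_gcd h3 h1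
  rwa [Nat.Coprime.gcd_eq_one (hcop.pow_right k), Nat.dvd_one, orderOf_eq_one_iff] at h4

omit [Finite G] in
/-- Two subgroups of a common `p`-subgroup with comparable images mod `H` are comparable. -/
lemma stmt7_aux_le (hcop : (Nat.card H).Coprime p) {T A B : Subgroup G}
    (hT : IsPGroup p T) (hA : A ≤ T) (hB : B ≤ T)
    (hmap : Subgroup.map (QuotientGroup.mk' H) A ≤ Subgroup.map (QuotientGroup.mk' H) B) :
    A ≤ B := by
  intro x hx
  obtain ⟨y, hyB, hy⟩ := hmap (mem_map_of_mem _ hx)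
  have hzH : y⁻¹ * x ∈ H := by
    rw [← QuotientGroup.ker_mk' H, MonoidHom.mem_ker, map_mul, map_inv, hy, inv_mul_cancel]
  have hzT : y⁻¹ * x ∈ T := mul_mem (inv_mem (hB hyB)) (hA hx)
  obtain ⟨k, hk⟩ := hT ⟨y⁻¹ * x, hzT⟩
  have hk' : (y⁻¹ * x) ^ p ^ k = 1 := by
    have := congrArg (Subtype.val) hk
    simpa using this
  have h1 : y⁻¹ * x = 1 := stmt7_aux_triv hcop hzH hk'
  exact inv_mul_eq_one.mp h1 ▸ hyB

/-- Any `p`-subgroup of the quotient lifts to a `p`-subgroup of `G`. -/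
lemma stmt7_aux_lift (hp : p.Prime) {Q : Subgroup (G ⧸ H)} (hQ : IsPGroup p Q) :
    ∃ P : Subgroup G, IsPGroup p P ∧ Subgroup.map (QuotientGroup.mk' H) P = Q := by
  haveI : Fact p.Prime := ⟨hp⟩
  set π := QuotientGroup.mk' H
  set K : Subgroup G := Q.comap π with hK
  let φ : K →* Q := ((π.comp K.subtype).codRestrict Q (fun k => k.2))
  have hφ : Function.Surjective φ := by
    intro q
    obtain ⟨g, hg⟩ := QuotientGroup.mk'_surjective H (q : G ⧸ H)
    have hgK : g ∈ K := by
      show π g ∈ Q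
      rw [show π g = (q : G ⧸ H) from hg]
      exact q.2
    exact ⟨⟨g, hgK⟩, Subtype.ext hg⟩
  obtain ⟨S⟩ : Nonempty (Sylow p K) := Sylow.nonempty
  have htop : IsPGroup p (⊤ : Subgroup Q) := hQ.to_subgroup ⊤
  have hS' : ((S.mapSurjective hφ : Sylow p Q) : Subgroup Q) = ⊤ :=
    ((S.mapSurjective hφ).3 htop le_top).symm
  have hSmap : Subgroup.map φ (S : Subgroup K) = ⊤ := by rw [← hS']; rfl
  refine ⟨Subgroup.map K.subtype S, S.2.map _, ?_⟩
  have hcomp : π.comp K.subtype = Q.subtype.comp φ := by ext k; rfl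
  rw [Subgroup.map_map, hcomp, ← Subgroup.map_map, hSmap]
  exact le_antisymm (map_subtype_le ⊤) (fun x hx => ⟨⟨x, hx⟩, trivial, rfl⟩)

end StmtAux

/-- Let `p` be a prime, `G` a finite group and `H ⊴ G` a normal
subgroup of order coprime to `p`, with quotient map `π : G → G/H`.  (i) Every chain
of `p`-subgroups of `G/H` lifts to a chain of `p`-subgroups of `G`; (ii) two chains of
`p`-subgroups of `G` with the same images under `π` are conjugate by an element of `H`. -/
theorem stmt7 (p : ℕ) (hp : p.Prime) (G : Type*) [Group G] [Finite G]
    (H : Subgroup G) [H.Normal] (hcop : (Nat.card H).Coprime p) :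
    (∀ (m : ℕ) (Q : Fin (m + 1) → Subgroup (G ⧸ H)), Monotone Q →
      (∀ t, IsPGroup p (Q t)) →
      ∃ P : Fin (m + 1) → Subgroup G, Monotone P ∧ (∀ t, IsPGroup p (P t)) ∧
        ∀ t, Subgroup.map (QuotientGroup.mk' H) (P t) = Q t) ∧
    (∀ (m : ℕ) (P P' : Fin (m + 1) → Subgroup G), Monotone P → Monotone P' →
      (∀ t, IsPGroup p (P t)) → (∀ t, IsPGroup p (P' t)) →
      (∀ t, Subgroup.map (QuotientGroup.mk' H) (P t)
          = Subgroup.map (QuotientGroup.mk' H) (P' t)) →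
      ∃ h ∈ H, ∀ t, Subgroup.map (MulAut.conj h).toMonoidHom (P t) = P' t) := by
  haveI : Fact p.Prime := ⟨hp⟩
  set π := QuotientGroup.mk' H with hπdef
  constructor
  · -- Part (i): lifting chains
    intro m Q hQmono hQp
    obtain ⟨Pm, hPmp, hPmmap⟩ := stmt7_aux_lift hp (hQp (Fin.last m))
    refine ⟨fun t => Pm ⊓ (Q t).comap π, ?_, ?_, ?_⟩
    · intro s t hst
      exact inf_le_inf le_rfl (comap_mono (hQmono hst))
    · intro t
      exact hPmp.to_le inf_le_left
    · intro t
      apply le_antisymm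
      · intro q hq
        obtain ⟨x, hx, rfl⟩ := hq
        exact hx.2
      · intro q hq
        have hqm : q ∈ Q (Fin.last m) := hQmono (Fin.le_last t) hq
        rw [← hPmmap] at hqm
        obtain ⟨x, hx, rfl⟩ := hqm
        exact ⟨x, ⟨hx, hq⟩, rfl⟩
  · -- Part (ii): conjugacy
    intro m P P' hPmono hP'mono hPp hP'p hmaps
    set l : Fin (m + 1) := Fin.last m with hl
    set Q : Subgroup (G ⧸ H) := Subgroup.map π (P l) with hQ
    have hQ' : Subgroup.map π (P' l) = Q := (hmaps l).symm
    set K : Subgroup G := Q.comap π with hK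
    have hPlK : P l ≤ K := le_comap_map π (P l)
    have hP'lK : P' l ≤ K := by rw [hK, ← hQ']; exact le_comap_map π _
    have hπsurj : Function.Surjective π := QuotientGroup.mk'_surjective H
    have hmapK : Subgroup.map π K = Q := map_comap_eq_self_of_surjective hπsurj Q
    -- a Sylow builder
    have mkSyl : ∀ A : Subgroup G, IsPGroup p A → A ≤ K →
        Subgroup.map π A = Q →
        ∀ {R : Subgroup K}, IsPGroup p R → A.subgroupOf K ≤ R → R = A.subgroupOf K := by
      intro A hAp hAK hAmap R hRp hle
      have hR'p : IsPGroup p (Subgroup.map K.subtype R) := hRp.map _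
      have hAR' : A ≤ Subgroup.map K.subtype R := by
        have := Subgroup.map_mono (f := K.subtype) hle
        rwa [subgroupOf_map_subtype, inf_of_le_left hAK] at this
      have hR'K : Subgroup.map K.subtype R ≤ K := map_subtype_le R
      have hR'map : Subgroup.map π (Subgroup.map K.subtype R) ≤ Subgroup.map π A := by
        rw [hAmap, ← hmapK]
        exact Subgroup.map_mono hR'K
      have hR'A : Subgroup.map K.subtype R ≤ A :=
        stmt7_aux_le hcop hR'p le_rfl hAR' hR'map
      have hR'eq : Subgroup.map K.subtype R = A := le_antisymm hR'A hAR'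
      rw [← hR'eq]
      exact (Subgroup.comap_map_eq_self_of_injective K.subtype_injective R).symm
    let S : Sylow p K := ⟨(P l).subgroupOf K, (hPp l).comap_subtype,
      fun hRp hle => mkSyl (P l) (hPp l) hPlK hQ.symm hRp hle⟩
    let S' : Sylow p K := ⟨(P' l).subgroupOf K, (hP'p l).comap_subtype,
      fun hRp hle => mkSyl (P' l) (hP'p l) hP'lK hQ' hRp hle⟩
    obtain ⟨g, hg⟩ := MulAction.exists_smul_eq K S S'
    -- translate conjugation to G
    have hcompconj : K.subtype.comp (MulAut.conj g).toMonoidHom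
        = (MulAut.conj (g : G)).toMonoidHom.comp K.subtype := by
      ext x; rfl
    have hgconj : Subgroup.map (MulAut.conj (g : G)).toMonoidHom (P l) = P' l := by
      have h1 : ((g • S : Sylow p K) : Subgroup K) = (P' l).subgroupOf K := congrArg _ hg
      have h2 : ((g • S : Sylow p K) : Subgroup K)
          = Subgroup.map (MulAut.conj g).toMonoidHom ((P l).subgroupOf K) := rfl
      calc Subgroup.map (MulAut.conj (g : G)).toMonoidHom (P l)
          = Subgroup.map (MulAut.conj (g : G)).toMonoidHom
            (Subgroup.map K.subtype ((P l).subgroupOf K)) := by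
            rw [subgroupOf_map_subtype, inf_of_le_left hPlK]
        _ = Subgroup.map K.subtype
            (Subgroup.map (MulAut.conj g).toMonoidHom ((P l).subgroupOf K)) := by
            rw [Subgroup.map_map, Subgroup.map_map, hcompconj]
        _ = Subgroup.map K.subtype ((P' l).subgroupOf K) := by rw [← h2, h1]
        _ = P' l := by rw [subgroupOf_map_subtype, inf_of_le_left hP'lK]
    -- pick x₀ ∈ P l with π x₀ = π g, and set h := g * x₀⁻¹ ∈ H
    have hgQ : π (g : G) ∈ Q := g.2
    rw [hQ] at hgQ
    obtain ⟨x₀, hx₀, hx₀eq⟩ := hgQ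
    refine ⟨(g : G) * x₀⁻¹, ?_, ?_⟩
    · rw [← QuotientGroup.ker_mk' H, MonoidHom.mem_ker, map_mul, map_inv, hx₀eq, mul_inv_cancel]
    · -- first, conjugation by h sends P l to P' l
      have hx₀conj : Subgroup.map (MulAut.conj x₀⁻¹).toMonoidHom (P l) = P l := by
        apply le_antisymm
        · rintro y ⟨a, ha, rfl⟩
          simpa using mul_mem (mul_mem (inv_mem hx₀) ha) hx₀
        · intro y hy
          refine ⟨x₀ * y * x₀⁻¹, mul_mem (mul_mem hx₀ hy) (inv_mem hx₀), ?_⟩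
          show x₀⁻¹ * (x₀ * y * x₀⁻¹) * x₀⁻¹⁻¹ = y
          group
      have hhconj : Subgroup.map (MulAut.conj ((g : G) * x₀⁻¹)).toMonoidHom (P l) = P' l := by
        rw [map_mul]
        have hmulhom : ((MulAut.conj (g : G)) * (MulAut.conj x₀⁻¹)).toMonoidHom
            = (MulAut.conj (g : G)).toMonoidHom.comp (MulAut.conj x₀⁻¹).toMonoidHom := by
          ext a; rfl
        rw [hmulhom, ← Subgroup.map_map, hx₀conj, hgconj]
      intro t
      have hπh : π ((g : G) * x₀⁻¹) = 1 := by
        rw [map_mul, map_inv, hx₀eq, mul_inv_cancel]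
      have hπcomp : π.comp (MulAut.conj ((g : G) * x₀⁻¹)).toMonoidHom = π := by
        ext a
        have hconjapp : (MulAut.conj ((g : G) * x₀⁻¹)).toMonoidHom a
            = ((g : G) * x₀⁻¹) * a * ((g : G) * x₀⁻¹)⁻¹ := rfl
        rw [MonoidHom.comp_apply, hconjapp, map_mul, map_mul, map_inv, hπh, one_mul,
          inv_one, mul_one]
      have hAle : Subgroup.map (MulAut.conj ((g : G) * x₀⁻¹)).toMonoidHom (P t) ≤ P' l := by
        rw [← hhconj]
        exact Subgroup.map_mono (hPmono (Fin.le_last t))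
      have hAmap : Subgroup.map π (Subgroup.map (MulAut.conj ((g : G) * x₀⁻¹)).toMonoidHom (P t))
          = Subgroup.map π (P' t) := by
        rw [Subgroup.map_map, hπcomp, hmaps t]
      exact le_antisymm
        (stmt7_aux_le hcop (hP'p l) hAle (hP'mono (Fin.le_last t)) (le_of_eq hAmap))
        (stmt7_aux_le hcop (hP'p l) (hP'mono (Fin.le_last t)) hAle (le_of_eq hAmap.symm))
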